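/- Let F be a finite field of odd characteristic and let a ∈ F be such that a² − 1 is a nonzero square in F and 2(1+a) is a square in F. Then the number of pairs (x,y) ∈ F × F satisfying y² = x³ + 2a·x² + x is congruent to 7 modulo 8. (Equivalently, 8 divides the total number of F-points of the elliptic curve E_∞, including the point at infinity, since its group of F-points contains a subgroup isomorphic to ℤ/4 × ℤ/2.) -/

import Mathlib

open WeierstrassCurve WeierstrassCurve.Affine

private def vgtW (F : Type*) [CommRing F] (a : F) : WeierstrassCurve.Affine F :=
  { a₁ := 0, a₂ := 2*a, a₃ := 0, a₄ := 1, a₆ := 0 }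

private lemma vgtW_equation_iff {F : Type*} [Field F] (a x y : F) :
    (vgtW F a).Equation x y ↔ y ^ 2 = x ^ 3 + 2 * a * x ^ 2 + x := by
  rw [WeierstrassCurve.Affine.equation_iff]
  simp only [vgtW]
  constructor <;> intro h <;> linear_combination h

private lemma vgtW_nonsingular {F : Type*} [Field F] {a x y : F} (h2 : (2:F) ≠ 0)
    (ha : a ^ 2 - 1 ≠ 0) (h : (vgtW F a).Equation x y) : (vgtW F a).Nonsingular x y := by
  rw [WeierstrassCurve.Affine.nonsingular_iff]
  refine ⟨h, ?_⟩
  simp only [vgtW]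
  rw [vgtW_equation_iff] at h
  by_cases hy : y = 0
  · left
    subst hy
    intro hcontra
    have heq : x ^ 3 + 2*a*x^2 + x = 0 := by linear_combination -h
    have hx3 : 3*x^2 + 4*a*x + 1 = 0 := by linear_combination -hcontra
    by_cases hx0 : x = 0
    · subst hx0; simp at hx3
    · have hq : x^2 + 2*a*x + 1 = 0 := by
        have := mul_left_cancel₀ hx0 (by linear_combination heq : x * (x^2+2*a*x+1) = x * 0)
        simpa using this
      have hax : a*x + 1 = 0 := by
        have h2' : 2*(a*x+1) = 0 := by linear_combination 3*hq - hx3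
        exact (mul_eq_zero.mp h2').resolve_left h2
      have hx2 : x^2 = 1 := by linear_combination hq - 2*hax
      apply ha
      have : a^2 * x^2 = 1 := by linear_combination (a*x - 1) * hax
      rw [hx2] at this; linear_combination this
  · right
    intro hcontra
    exact hy <| (mul_eq_zero.mp (by linear_combination hcontra : 2*y = 0)).resolve_left h2

private lemma vgt_some_eq_some {F : Type*} [Field F] {W : WeierstrassCurve.Affine F}
    {x₁ y₁ x₂ y₂ : F} (h₁ : W.Nonsingular x₁ y₁) (h₂ : W.Nonsingular x₂ y₂)
    (hx : x₁ = x₂) (hy : y₁ = y₂) : Point.some _ _ h₁ = Point.some _ _ h₂ := by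
  subst hx; subst hy; rfl

private def vgtCoords {F : Type*} [Field F] {W : WeierstrassCurve.Affine F} :
    W.Point → Option (F × F)
  | .zero => none
  | @Point.some _ _ _ x y _ => some (x, y)

private lemma vgtCoords_injective {F : Type*} [Field F] {W : WeierstrassCurve.Affine F} :
    Function.Injective (vgtCoords (W := W)) := by
  rintro (_ | @⟨x₁, y₁, h₁⟩) (_ | @⟨x₂, y₂, h₂⟩) h <;> simp [vgtCoords] at h ⊢
  exact ⟨h.1, h.2⟩



/-- Over a finite field `F` of odd characteristic, if `a² − 1` is a nonzero square in `F`
and `2(1+a)` is a square in `F`, then the number of affine points `(x, y) ∈ F × F` with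
`y² = x³ + 2ax² + x` is congruent to `7` modulo `8` (equivalently, `8` divides the total
number of `F`-points of `E_∞`, including the point at infinity, since the group of
`F`-points contains a subgroup isomorphic to `ℤ/4 × ℤ/2`). -/
theorem vanGeemenTop_infinity_count_mod_eight {F : Type*} [Field F] [Fintype F]
    (hchar : ringChar F ≠ 2) (a : F)
    (hsq1 : ∃ c : F, c ≠ 0 ∧ c ^ 2 = a ^ 2 - 1)
    (hsq2 : ∃ b : F, b ^ 2 = 2 * (1 + a)) :
    Nat.card {p : F × F // p.2 ^ 2 = p.1 ^ 3 + 2 * a * p.1 ^ 2 + p.1} % 8 = 7 := by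
  classical
  obtain ⟨c, hc0, hc⟩ := hsq1
  obtain ⟨s, hs⟩ := hsq2
  have h2 : (2:F) ≠ 0 := Ring.two_ne_zero hchar
  have ha : a ^ 2 - 1 ≠ 0 := hc ▸ pow_ne_zero 2 hc0
  set W : WeierstrassCurve.Affine F := vgtW F a with hW
  -- the three interesting points
  have hs0 : s ≠ 0 := by
    intro h0
    apply ha
    have : 2 * (1 + a) = 0 := by rw [← hs, h0]; ring
    have h1a : 1 + a = 0 := (mul_eq_zero.mp this).resolve_left h2
    linear_combination (a - 1) * h1a
  set r : F := c - a with hrdef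
  have hrr : r ^ 2 + 2 * a * r + 1 = 0 := by
    simp only [hrdef]; linear_combination hc
  have hr0 : r ≠ 0 := by
    intro h0; rw [h0] at hrr; simp at hrr
  have nsT : W.Nonsingular 0 0 := vgtW_nonsingular h2 ha <| by
    rw [vgtW_equation_iff]; ring
  have nsQ : W.Nonsingular r 0 := vgtW_nonsingular h2 ha <| by
    rw [vgtW_equation_iff]; linear_combination -r * hrr
  have nsP : W.Nonsingular 1 s := vgtW_nonsingular h2 ha <| by
    rw [vgtW_equation_iff]; linear_combination hs
  set T : W.Point := Point.some _ _ nsT with hTdef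
  set Q : W.Point := Point.some _ _ nsQ with hQdef
  set P : W.Point := Point.some _ _ nsP with hPdef
  have hnegY : ∀ x y : F, W.negY x y = -y := by
    intro x y; simp [hW, vgtW, WeierstrassCurve.Affine.negY]
  -- 2-torsion
  have hTT : T + T = 0 := Point.add_of_Y_eq rfl (by rw [hnegY]; ring)
  have hQQ : Q + Q = 0 := Point.add_of_Y_eq rfl (by rw [hnegY]; ring)
  -- doubling P gives T
  have hyP : s ≠ W.negY 1 s := by
    rw [hnegY]
    intro hcon
    exact hs0 <| (mul_eq_zero.mp (by linear_combination hcon : 2*s = 0)).resolve_left h2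
  have hslope : W.slope 1 1 s s = s := by
    rw [WeierstrassCurve.Affine.slope_of_Y_ne rfl hyP, hnegY]
    rw [div_eq_iff (by
      intro hcon
      exact hs0 <| (mul_eq_zero.mp (by linear_combination hcon : 2*s = 0)).resolve_left h2)]
    simp only [hW, vgtW]
    linear_combination -2 * hs
  have hPP : P + P = T := by
    rw [hPdef, Point.add_self_of_Y_ne hyP]
    apply vgt_some_eq_some
    · rw [hslope]
      simp only [hW, vgtW, WeierstrassCurve.Affine.addX]
      linear_combination hs
    · rw [WeierstrassCurve.Affine.addY, WeierstrassCurve.Affine.negAddY, hnegY, hslope]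
      have hX : W.addX 1 1 s = 0 := by
        simp only [hW, vgtW, WeierstrassCurve.Affine.addX]
        linear_combination hs
      rw [hX]; ring
  -- the points are distinct / nonzero
  have hT0 : T ≠ 0 := Point.some_ne_zero nsT
  have hQ0 : Q ≠ 0 := Point.some_ne_zero nsQ
  have hP0 : P ≠ 0 := Point.some_ne_zero nsP
  have hTQ : T ≠ Q := by
    intro h
    have := congrArg vgtCoords h
    simp only [hTdef, hQdef, vgtCoords, Option.some.injEq, Prod.mk.injEq] at this
    exact hr0 this.1.symm
  -- finiteness
  haveI : Finite W.Point := Finite.of_injective vgtCoords vgtCoords_injective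
  -- torsion orders
  have h4P : (4:ℤ) • P = 0 := by
    rw [show (4:ℤ) = 2 + 2 by norm_num, add_zsmul, two_zsmul, hPP, hTT]
  have h2Q : (2:ℤ) • Q = 0 := by rw [two_zsmul, hQQ]
  -- the injective homomorphism from ZMod 4 × ZMod 2
  set f1 : ZMod 4 →+ W.Point := ZMod.lift 4 ⟨zmultiplesHom W.Point P, by simpa using h4P⟩ with hf1def
  set f2 : ZMod 2 →+ W.Point := ZMod.lift 2 ⟨zmultiplesHom W.Point Q, by simpa using h2Q⟩ with hf2def
  have hf1 : ∀ k : ℤ, f1 (k : ZMod 4) = k • P := fun k => ZMod.lift_coe _ _ k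
  have hf2 : ∀ k : ℤ, f2 (k : ZMod 2) = k • Q := fun k => ZMod.lift_coe _ _ k
  set f : ZMod 4 × ZMod 2 →+ W.Point := f1.coprod f2 with hfdef
  have hinj : Function.Injective f := by
    rw [injective_iff_map_eq_zero]
    rintro ⟨i, j⟩ h
    rw [hfdef, AddMonoidHom.coprod_apply] at h
    rcases (show ∀ k : ZMod 4, k = ((0:ℤ) : ZMod 4) ∨ k = ((1:ℤ) : ZMod 4) ∨
        k = ((2:ℤ) : ZMod 4) ∨ k = ((3:ℤ) : ZMod 4) by decide) i with rfl | rfl | rfl | rfl <;>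
      rcases (show ∀ k : ZMod 2, k = ((0:ℤ) : ZMod 2) ∨ k = ((1:ℤ) : ZMod 2) by decide) j
        with rfl | rfl <;>
      rw [hf1, hf2] at h <;>
      simp only [zero_zsmul, one_zsmul, add_zero, zero_add] at h
    · rfl
    · exact absurd h hQ0
    · exact absurd h hP0
    · -- P + Q = 0
      exfalso
      have hd : (P + Q) + (P + Q) = (0:W.Point) + 0 := by rw [h]
      rw [add_add_add_comm, hPP, hQQ, add_zero, add_zero] at hd
      exact hT0 hd
    · -- 2P = 0
      exfalso
      rw [two_zsmul, hPP] at h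
      exact hT0 h
    · -- 2P + Q = 0
      exfalso
      rw [two_zsmul, hPP] at h
      have hd : (T + Q) + Q = (0:W.Point) + Q := by rw [h]
      rw [add_assoc, hQQ, add_zero, zero_add] at hd
      exact hTQ hd
    · -- 3P = 0
      exfalso
      rw [show (3:ℤ) = 2 + 1 by norm_num, add_zsmul, two_zsmul, one_zsmul, hPP] at h
      have hd : (T + P) + (T + P) = (0:W.Point) + 0 := by rw [h]
      rw [add_add_add_comm, hTT, hPP, zero_add, add_zero] at hd
      exact hT0 hd
    · -- 3P + Q = 0
      exfalso
      rw [show (3:ℤ) = 2 + 1 by norm_num, add_zsmul, two_zsmul, one_zsmul, hPP] at h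
      have hd : (T + P + Q) + (T + P + Q) = (0:W.Point) + 0 := by rw [h]
      rw [add_add_add_comm, add_add_add_comm T P T P, hTT, hPP, zero_add, hQQ, add_zero,
        add_zero] at hd
      exact hT0 hd
  have hdvd : (8:ℕ) ∣ Nat.card W.Point := by
    have := AddSubgroup.card_dvd_of_injective f hinj
    simpa [Nat.card_eq_fintype_card] using this
  -- relate Nat.card W.Point to the affine count
  set S := {p : F × F // p.2 ^ 2 = p.1 ^ 3 + 2 * a * p.1 ^ 2 + p.1} with hSdef
  have e : W.Point ≃ Option S := by
    refine ⟨fun X => ?_, fun o => ?_, ?_, ?_⟩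
    · exact match X with
      | .zero => none
      | @Point.some _ _ _ x y h =>
          some ⟨(x, y), (vgtW_equation_iff a x y).mp h.1⟩
    · exact match o with
      | none => Point.zero
      | some ⟨(x, y), hp⟩ =>
          Point.some _ _ (vgtW_nonsingular h2 ha ((vgtW_equation_iff a x y).mpr hp))
    · rintro (_ | @⟨x, y, h⟩) <;> rfl
    · rintro (_ | ⟨⟨x, y⟩, hp⟩) <;> rfl
  have hcard : Nat.card W.Point = Nat.card S + 1 := by
    rw [Nat.card_congr e]
    simp [Nat.card_eq_fintype_card]
  have hpos : 0 < Nat.card W.Point := Nat.card_pos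
  rw [hcard] at hdvd hpos
  omega
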